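/- If F: X → P(Y) is upper Hausdorff continuous at x₀ ∈ dom F, then the family of scalarizations {φ_{F,w*} : w* ∈ W*} is lower equicontinuous at x₀: for all ε > 0 there exists a 0-neighborhood V in X such that φ_{F,w*}(x₀) ≤ φ_{F,w*}(x) + ε for all x ∈ x₀ + V and all w* ∈ W*. -/

import Mathlib

open Pointwise Set Filter Topology

/-- Scalarization of a set `A ⊆ Y` by a weak-star functional: `inf {w(a) : a ∈ A}` in `EReal`
(with `inf ∅ = +∞`). -/
noncomputable def scal {Y : Type*} [AddCommMonoid Y] [Module ℝ Y] [TopologicalSpace Y]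
    (w : WeakDual ℝ Y) (A : Set Y) : EReal :=
  sInf ((fun a => ((w a : ℝ) : EReal)) '' A)

/-- `F` is `C`-convex. -/
def CConvex {X Y : Type*} [AddCommGroup X] [Module ℝ X] [AddCommGroup Y] [Module ℝ Y]
    (F : X → Set Y) (C : Set Y) : Prop :=
  ∀ x₁ x₂ : X, ∀ t : ℝ, t ∈ Set.Icc (0 : ℝ) 1 →
    t • F x₁ + (1 - t) • F x₂ ⊆ F (t • x₁ + (1 - t) • x₂) + C

/-- Lower Dini directional derivative of `φ : X → EReal` at `x` in direction `d`:
`liminf_{t → 0+} (φ (x + t • d) - φ x) * (1/t)`. -/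
noncomputable def diniX {X : Type*} [AddCommGroup X] [Module ℝ X]
    (φ : X → EReal) (x d : X) : EReal :=
  Filter.liminf (fun t : ℝ => (φ (x + t • d) - φ x) * (((1 : ℝ) / t : ℝ) : EReal))
    (nhdsWithin 0 (Set.Ioi 0))

theorem stmt_15 {X Y : Type*} [AddCommGroup X] [Module ℝ X] [TopologicalSpace X]
    [IsTopologicalAddGroup X]
    [AddCommGroup Y] [Module ℝ Y] [TopologicalSpace Y]
    [IsTopologicalAddGroup Y] [ContinuousSMul ℝ Y] [LocallyConvexSpace ℝ Y] [T2Space Y]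
    (C : Set Y) (hclosed : IsClosed C) (hconv : Convex ℝ C)
    (hcone : ∀ c ∈ C, ∀ r : ℝ, 0 ≤ r → r • c ∈ C)
    (hint : (interior C).Nonempty) (hCne : C ≠ Set.univ)
    (Wstar : Set (WeakDual ℝ Y)) (hWcpt : IsCompact Wstar)
    (hWsub : ∀ w ∈ Wstar, ∀ c ∈ C, 0 ≤ w c) (hW0 : (0 : WeakDual ℝ Y) ∉ Wstar)
    (hWbase : ∀ w : WeakDual ℝ Y, (∀ c ∈ C, 0 ≤ w c) → w ≠ 0 →
      ∃ t : ℝ, 0 < t ∧ ∃ w' ∈ Wstar, w = t • w')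
    (F : X → Set Y) (x₀ : X) (hx₀ : (F x₀).Nonempty)
    (hH : ∀ U ∈ nhds (0 : Y), ∃ V ∈ nhds (0 : X), ∀ x : X, x - x₀ ∈ V → F x ⊆ F x₀ + U) :
    ∀ ε : ℝ, 0 < ε → ∃ V ∈ nhds (0 : X), ∀ x : X, x - x₀ ∈ V →
      ∀ w ∈ Wstar, scal w (F x₀) ≤ scal w (F x) + ((ε : ℝ) : EReal) := by
  intro ε hε
  rcases Wstar.eq_empty_or_nonempty with hWe | hWne
  · exact ⟨Set.univ, univ_mem, fun x _ w hw => by simp [hWe] at hw⟩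
  obtain ⟨e, he⟩ := hint
  -- U₀ : 0-nbhd with e + u ∈ C
  have hU₀ : (fun u : Y => e + u) ⁻¹' C ∈ nhds (0 : Y) := by
    have : Continuous fun u : Y => e + u := continuous_const.add continuous_id
    have hCe : C ∈ nhds e := mem_nhds_iff.mpr ⟨interior C, interior_subset, isOpen_interior, he⟩
    exact this.continuousAt.preimage_mem_nhds (by simpa using hCe)
  set U₀ : Set Y := (fun u : Y => e + u) ⁻¹' C with hU₀def
  -- M bound
  have hcont : Continuous fun w : WeakDual ℝ Y => w e := WeakBilin.eval_continuous _ e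
  have hScpt : IsCompact ((fun w : WeakDual ℝ Y => w e) '' Wstar) := hWcpt.image hcont
  have hbdd : BddAbove ((fun w : WeakDual ℝ Y => w e) '' Wstar) := hScpt.bddAbove
  set M : ℝ := sSup ((fun w : WeakDual ℝ Y => w e) '' Wstar) with hMdef
  have hM : ∀ w ∈ Wstar, w e ≤ M := fun w hw => le_csSup hbdd ⟨w, hw, rfl⟩
  have hM0 : 0 ≤ M := by
    obtain ⟨w, hw⟩ := hWne
    exact le_trans (hWsub w hw e (interior_subset he)) (hM w hw)
  set c : ℝ := ε / (M + 1) with hcdef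
  have hc : 0 < c := div_pos hε (by linarith)
  -- key bound on U := c • U₀
  have hUnhds : c • U₀ ∈ nhds (0 : Y) := by
    rw [set_smul_mem_nhds_zero_iff hc.ne']
    exact hU₀
  have hkey : ∀ w ∈ Wstar, ∀ u ∈ c • U₀, -ε ≤ w u := by
    intro w hw u hu
    obtain ⟨v, hv, rfl⟩ := hu
    have h1 : 0 ≤ w (e + v) := hWsub w hw _ hv
    have h2 : -(M + 1) ≤ w v := by
      have := hM w hw
      have : w (e + v) = w e + w v := map_add w e v
      linarith [hWsub w hw _ hv, hM w hw, map_add w e v ▸ h1]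
    have : w (c • v) = c * w v := map_smul w c v
    rw [this]
    have : c * (-(M+1)) ≤ c * w v := by
      exact mul_le_mul_of_nonneg_left h2 hc.le
    have hce : c * (M + 1) = ε := div_mul_cancel₀ ε (by linarith : M + (1:ℝ) ≠ 0)
    nlinarith
  obtain ⟨V, hV, hFV⟩ := hH (c • U₀) hUnhds
  refine ⟨V, hV, fun x hx w hw => ?_⟩
  -- scal w (F x₀) ≠ ⊤
  obtain ⟨y₀, hy₀⟩ := hx₀
  have hscne : scal w (F x₀) ≠ ⊤ := by
    have : scal w (F x₀) ≤ ((w y₀ : ℝ) : EReal) := sInf_le ⟨y₀, hy₀, rfl⟩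
    exact ne_top_of_le_ne_top (EReal.coe_ne_top _) this
  have hsub : scal w (F x₀) - ((ε : ℝ) : EReal) ≤ scal w (F x) := by
    apply le_sInf
    rintro b ⟨y, hy, rfl⟩
    obtain ⟨y₁, hy₁, u, hu, rfl⟩ := hFV x hx hy
    have h1 : scal w (F x₀) ≤ ((w y₁ : ℝ) : EReal) := sInf_le ⟨y₁, hy₁, rfl⟩
    have h2 : w y₁ ≤ w (y₁ + u) + ε := by
      have ha := hkey w hw u hu
      have hb : w (y₁ + u) = w y₁ + w u := map_add w y₁ u
      linarith
    calc scal w (F x₀) - ((ε : ℝ) : EReal)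
        ≤ ((w y₁ : ℝ) : EReal) - ((ε : ℝ) : EReal) := EReal.sub_le_sub h1 le_rfl
      _ ≤ (((w (y₁ + u) + ε : ℝ)) : EReal) - ((ε : ℝ) : EReal) := by
          apply EReal.sub_le_sub _ le_rfl
          exact_mod_cast h2
      _ = ((w (y₁ + u) : ℝ) : EReal) := by
          rw [show (((w (y₁ + u) + ε : ℝ)) : EReal) = ((w (y₁ + u) : ℝ) : EReal) + ((ε:ℝ):EReal) by norm_cast]
          exact EReal.add_sub_cancel_right
  calc scal w (F x₀) = scal w (F x₀) - ((ε : ℝ) : EReal) + ((ε : ℝ) : EReal) :=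
        (EReal.sub_add_cancel).symm
    _ ≤ scal w (F x) + ((ε : ℝ) : EReal) := add_le_add_left hsub _
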